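/- Let V denote the set of 2×2 integer matrices of trace 0. Let q be a positive integer and let v, w ∈ V be primitive (the gcd of the four entries of v is 1, and likewise for w). Suppose that for every prime p dividing q, the reductions of v and w mod p are linearly independent over 𝔽_p. Then for every Z ∈ V there exist X, Y ∈ V such that [v,X] + [w,Y] ≡ 2Z (mod q), where [a,b] = ab − ba and the congruence is entrywise. -/

import Mathlib

open Matrix

lemma cross_zero_prop {K : Type*} [Field K] {x v : Fin 3 → K} (hx : x ≠ 0)
    (h : crossProduct x v = 0) : ∃ c : K, v = c • x := by
  have e0 : x 1 * v 2 - x 2 * v 1 = 0 := by simpa [cross_apply] using congrFun h 0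
  have e1 : x 2 * v 0 - x 0 * v 2 = 0 := by simpa [cross_apply] using congrFun h 1
  have e2 : x 0 * v 1 - x 1 * v 0 = 0 := by simpa [cross_apply] using congrFun h 2
  have hcase : x 0 ≠ 0 ∨ x 1 ≠ 0 ∨ x 2 ≠ 0 := by
    by_contra hc
    push_neg at hc
    exact hx (by funext j; fin_cases j <;> simp [hc.1, hc.2.1, hc.2.2])
  have key : ∀ c : K, v 0 = c * x 0 → v 1 = c * x 1 → v 2 = c * x 2 → ∃ c : K, v = c • x := by
    intro c g0 g1 g2
    refine ⟨c, funext fun j => ?_⟩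
    fin_cases j
    · exact g0
    · exact g1
    · exact g2
  rcases hcase with h0 | h1 | h2
  · refine key (v 0 / x 0) ?_ ?_ ?_
    · rw [div_mul_cancel₀ _ h0]
    · rw [div_mul_eq_mul_div, eq_div_iff h0]; linear_combination e2
    · rw [div_mul_eq_mul_div, eq_div_iff h0]; linear_combination -e1
  · refine key (v 1 / x 1) ?_ ?_ ?_
    · rw [div_mul_eq_mul_div, eq_div_iff h1]; linear_combination -e2
    · rw [div_mul_cancel₀ _ h1]
    · rw [div_mul_eq_mul_div, eq_div_iff h1]; linear_combination e0
  · refine key (v 2 / x 2) ?_ ?_ ?_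
    · rw [div_mul_eq_mul_div, eq_div_iff h2]; linear_combination e1
    · rw [div_mul_eq_mul_div, eq_div_iff h2]; linear_combination -e0
    · rw [div_mul_cancel₀ _ h2]

lemma cross_surj {K : Type*} [Field K] {v w : Fin 3 → K}
    (h : LinearIndependent K ![v, w]) (t : Fin 3 → K) :
    ∃ X Y : Fin 3 → K, crossProduct v X + crossProduct w Y = t := by
  classical
  set φ : ((Fin 3 → K) × (Fin 3 → K)) →ₗ[K] (Fin 3 → K) :=
    (crossProduct v).comp (LinearMap.fst K _ _) + (crossProduct w).comp (LinearMap.snd K _ _)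
    with hφ
  suffices hs : LinearMap.range φ = ⊤ by
    have ht : t ∈ LinearMap.range φ := hs ▸ Submodule.mem_top
    obtain ⟨⟨X, Y⟩, hXY⟩ := ht
    exact ⟨X, Y, by simpa [hφ] using hXY⟩
  by_contra hne
  obtain ⟨ξ, hξ0, hξ⟩ := Submodule.exists_dual_map_eq_bot_of_lt_top
    (lt_top_iff_ne_top.2 hne) inferInstance
  set x : Fin 3 → K := fun i => ξ (fun j => if i = j then 1 else 0) with hxdef
  have hxy : ∀ y : Fin 3 → K, ξ y = ∑ i, y i * x i := by
    intro y
    rw [LinearMap.pi_apply_eq_sum_univ ξ y]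
    simp [hxdef, smul_eq_mul]
  have hker : ∀ u ∈ LinearMap.range φ, ξ u = 0 := by
    intro u hu
    have hm : ξ u ∈ (LinearMap.range φ).map ξ := Submodule.mem_map_of_mem hu
    rw [hξ] at hm
    exact (Submodule.mem_bot K).1 hm
  have hvX : ∀ X : Fin 3 → K, ξ (crossProduct v X) = 0 :=
    fun X => hker _ ⟨(X, 0), by simp [hφ]⟩
  have hwY : ∀ Y : Fin 3 → K, ξ (crossProduct w Y) = 0 :=
    fun Y => hker _ ⟨(0, Y), by simp [hφ]⟩
  have hcomp : ∀ (u : Fin 3 → K), (∀ X, ξ (crossProduct u X) = 0) → crossProduct x u = 0 := by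
    intro u hu
    have e0 := hu (fun k => if (0 : Fin 3) = k then 1 else 0)
    have e1 := hu (fun k => if (1 : Fin 3) = k then 1 else 0)
    have e2 := hu (fun k => if (2 : Fin 3) = k then 1 else 0)
    rw [hxy] at e0 e1 e2
    simp [cross_apply, Fin.sum_univ_three] at e0 e1 e2
    funext j
    fin_cases j
    · simpa [cross_apply] using by linear_combination e0
    · simpa [cross_apply] using by linear_combination e1
    · simpa [cross_apply] using by linear_combination e2
  have hxv : crossProduct x v = 0 := hcomp v hvX
  have hxw : crossProduct x w = 0 := hcomp w hwY
  have hxne : x ≠ 0 := by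
    intro h0
    apply hξ0
    apply LinearMap.ext
    intro y
    rw [hxy]
    simp [show ∀ i, x i = 0 from fun i => congrFun h0 i]
  obtain ⟨c, hc⟩ := cross_zero_prop hxne hxv
  obtain ⟨c', hc'⟩ := cross_zero_prop hxne hxw
  rw [Fintype.linearIndependent_iff] at h
  have hg := h ![c', -c] (by
    simp only [Fin.sum_univ_two, Matrix.cons_val_zero, Matrix.cons_val_one, Matrix.head_cons]
    rw [hc, hc']
    module)
  have hc0 : c = 0 := by have := hg 1; simpa using this
  have hv0 : v = 0 := by rw [hc, hc0, zero_smul]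
  have := h ![1, 0] (by simp [Fin.sum_univ_two, hv0]) 0
  simp at this

lemma key_lemma (q : ℕ) (hq : 0 < q) (v3 w3 : Fin 3 → ℤ)
    (hind : ∀ p : ℕ, p.Prime → p ∣ q →
      LinearIndependent (ZMod p)
        ![(fun i => ((v3 i : ZMod p))), (fun i => ((w3 i : ZMod p)))]) :
    ∀ t : Fin 3 → ℤ, ∃ X Y : Fin 3 → ℤ, ∀ i : Fin 3,
      (q : ℤ) ∣ (crossProduct v3 X + crossProduct w3 Y - t) i := by
  set S : ℕ → Prop := fun n => ∀ t : Fin 3 → ℤ, ∃ X Y : Fin 3 → ℤ, ∀ i : Fin 3,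
      (n : ℤ) ∣ (crossProduct v3 X + crossProduct w3 Y - t) i with hS
  have S1 : S 1 := fun t => ⟨0, 0, fun i => by simp⟩
  have Sp : ∀ p : ℕ, p.Prime → p ∣ q → S p := by
    intro p pp hpq t
    haveI : Fact p.Prime := ⟨pp⟩
    obtain ⟨X', Y', hXY⟩ := cross_surj (hind p pp hpq) (fun i => ((t i : ZMod p)))
    refine ⟨fun i => (ZMod.cast (X' i) : ℤ), fun i => (ZMod.cast (Y' i) : ℤ), ?_⟩
    have hXY0 := congrFun hXY 0
    have hXY1 := congrFun hXY 1
    have hXY2 := congrFun hXY 2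
    simp only [cross_apply, Pi.add_apply, Matrix.cons_val_zero, Matrix.cons_val_one,
      Matrix.head_cons, Matrix.cons_val_two, Matrix.tail_cons] at hXY0 hXY1 hXY2
    have D0 : (p : ℤ) ∣ ((crossProduct v3 (fun i => (ZMod.cast (X' i) : ℤ))
        + crossProduct w3 (fun i => (ZMod.cast (Y' i) : ℤ)) - t) 0) := by
      rw [← ZMod.intCast_zmod_eq_zero_iff_dvd]
      simp only [cross_apply, Pi.add_apply, Pi.sub_apply, Matrix.cons_val_zero,
        Matrix.cons_val_one, Matrix.head_cons, Matrix.cons_val_two, Matrix.tail_cons]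
      push_cast
      linear_combination hXY0
    have D1 : (p : ℤ) ∣ ((crossProduct v3 (fun i => (ZMod.cast (X' i) : ℤ))
        + crossProduct w3 (fun i => (ZMod.cast (Y' i) : ℤ)) - t) 1) := by
      rw [← ZMod.intCast_zmod_eq_zero_iff_dvd]
      simp only [cross_apply, Pi.add_apply, Pi.sub_apply, Matrix.cons_val_zero,
        Matrix.cons_val_one, Matrix.head_cons, Matrix.cons_val_two, Matrix.tail_cons]
      push_cast
      linear_combination hXY1
    have D2 : (p : ℤ) ∣ ((crossProduct v3 (fun i => (ZMod.cast (X' i) : ℤ))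
        + crossProduct w3 (fun i => (ZMod.cast (Y' i) : ℤ)) - t) 2) := by
      rw [← ZMod.intCast_zmod_eq_zero_iff_dvd]
      simp only [cross_apply, Pi.add_apply, Pi.sub_apply, Matrix.cons_val_zero,
        Matrix.cons_val_one, Matrix.head_cons, Matrix.cons_val_two, Matrix.tail_cons]
      push_cast
      linear_combination hXY2
    intro i
    fin_cases i
    · exact D0
    · exact D1
    · exact D2
  have Spow : ∀ p k : ℕ, S p → S (p ^ k) := by
    intro p k hSp
    induction k with
    | zero => simpa using S1
    | succ j ih =>
      intro t
      obtain ⟨X, Y, hXY⟩ := ih t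
      choose s hs using fun i => hXY i
      obtain ⟨X', Y', hXY'⟩ := hSp (fun i => -(s i))
      refine ⟨X + (p ^ j : ℤ) • X', Y + (p ^ j : ℤ) • Y', fun i => ?_⟩
      have lin : (crossProduct v3 (X + (p ^ j : ℤ) • X') +
          crossProduct w3 (Y + (p ^ j : ℤ) • Y') - t) i
          = (crossProduct v3 X + crossProduct w3 Y - t) i
            + (p ^ j : ℤ) * ((crossProduct v3 X' + crossProduct w3 Y') i) := by
        simp only [map_add, _root_.map_smul, Pi.add_apply, Pi.sub_apply, Pi.smul_apply, smul_eq_mul]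
        ring
      have h2 := hXY' i
      simp only [Pi.add_apply, Pi.sub_apply] at h2
      obtain ⟨e2, he2⟩ : (p : ℤ) ∣ ((crossProduct v3 X' + crossProduct w3 Y') i + s i) := by
        simpa [sub_neg_eq_add] using h2
      rw [lin, hs i]
      exact ⟨e2, by push_cast [pow_succ]; linear_combination ((p : ℤ) ^ j) * he2⟩
  have Scop : ∀ m n : ℕ, Nat.Coprime m n → S m → S n → S (m * n) := by
    intro m n hco hm hn t
    obtain ⟨X1, Y1, h1⟩ := hm t
    obtain ⟨X2, Y2, h2⟩ := hn t
    obtain ⟨α, β, hαβ⟩ : ∃ α β : ℤ, α * m + β * n = 1 := by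
      obtain ⟨a, b, hab⟩ := Nat.isCoprime_iff_coprime.mpr hco
      exact ⟨a, b, hab⟩
    refine ⟨(β * n) • X1 + (α * m) • X2, (β * n) • Y1 + (α * m) • Y2, fun i => ?_⟩
    obtain ⟨e1, he1⟩ := h1 i
    obtain ⟨e2, he2⟩ := h2 i
    simp only [Pi.add_apply, Pi.sub_apply] at he1 he2
    refine ⟨β * e1 + α * e2, ?_⟩
    simp only [map_add, _root_.map_smul, Pi.add_apply, Pi.sub_apply, Pi.smul_apply, smul_eq_mul]
    push_cast
    linear_combination (β * (n : ℤ)) * he1 + (α * (m : ℤ)) * he2 + (t i) * hαβ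
  have main : ∀ n : ℕ, n ∣ q → S n := by
    intro n
    induction n using Nat.recOnPosPrimePosCoprime with
    | prime_pow p k pp hk =>
      intro hdvd
      exact Spow p k (Sp p pp (dvd_trans (dvd_pow_self p hk.ne') hdvd))
    | zero => intro hdvd; exact absurd (Nat.eq_zero_of_zero_dvd hdvd) hq.ne'
    | one => intro _; exact S1
    | coprime a b ha hb hco Pa Pb =>
      intro hdvd
      exact Scop a b hco (Pa (dvd_trans ⟨b, rfl⟩ hdvd)) (Pb (dvd_trans ⟨a, mul_comm a b ▸ rfl⟩ hdvd))
  exact main q dvd_rfl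

theorem statement16 (q : ℕ) (hq : 0 < q) (v w : Matrix (Fin 2) (Fin 2) ℤ)
    (hv : v.trace = 0) (hw : w.trace = 0)
    (hvprim : Finset.univ.gcd (fun p : Fin 2 × Fin 2 => v p.1 p.2) = 1)
    (hwprim : Finset.univ.gcd (fun p : Fin 2 × Fin 2 => w p.1 p.2) = 1)
    (hindep : ∀ p : ℕ, p.Prime → p ∣ q →
      LinearIndependent (ZMod p)
        ![v.map (Int.cast : ℤ → ZMod p), w.map (Int.cast : ℤ → ZMod p)]) :
    ∀ Z : Matrix (Fin 2) (Fin 2) ℤ, Z.trace = 0 →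
      ∃ X Y : Matrix (Fin 2) (Fin 2) ℤ, X.trace = 0 ∧ Y.trace = 0 ∧
        ∀ i j, (q : ℤ) ∣ ((v * X - X * v) + (w * Y - Y * w) - 2 • Z) i j := by
  have hv11 : v 1 1 = -v 0 0 := by
    rw [Matrix.trace_fin_two] at hv; linarith
  have hw11 : w 1 1 = -w 0 0 := by
    rw [Matrix.trace_fin_two] at hw; linarith
  set v3 : Fin 3 → ℤ := ![v 0 0, v 0 1, v 1 0] with hv3
  set w3 : Fin 3 → ℤ := ![w 0 0, w 0 1, w 1 0] with hw3
  have hind : ∀ p : ℕ, p.Prime → p ∣ q →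
      LinearIndependent (ZMod p)
        ![(fun i => ((v3 i : ZMod p))), (fun i => ((w3 i : ZMod p)))] := by
    intro p pp hpq
    rw [Fintype.linearIndependent_iff]
    intro g hg
    have hg' : g 0 • (fun i => ((v3 i : ZMod p))) + g 1 • (fun i => ((w3 i : ZMod p))) = 0 := by
      rw [← hg]; simp [Fin.sum_univ_two]
    have e0 := congrFun hg' 0
    have e1 := congrFun hg' 1
    have e2 := congrFun hg' 2
    simp only [hv3, hw3, Pi.add_apply, Pi.smul_apply, smul_eq_mul, Matrix.cons_val_zero,
      Matrix.cons_val_one, Matrix.head_cons, Matrix.cons_val_two, Matrix.tail_cons,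
      Pi.zero_apply] at e0 e1 e2
    have hmat := (Fintype.linearIndependent_iff.mp (hindep p pp hpq)) g (by
      ext i j
      simp only [Fin.sum_univ_two, Pi.add_apply, Pi.smul_apply, Matrix.cons_val_zero,
        Matrix.cons_val_one, Matrix.head_cons, Matrix.add_apply, Matrix.smul_apply,
        Matrix.map_apply, smul_eq_mul, Matrix.zero_apply]
      fin_cases i <;> fin_cases j
      · exact e0
      · exact e1
      · exact e2
      · push_cast [hv11, hw11]
        linear_combination -e0)
    exact fun i => hmat i
  intro Z hZ
  have hZ11 : Z 1 1 = -Z 0 0 := by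
    rw [Matrix.trace_fin_two] at hZ; linarith
  obtain ⟨X3, Y3, hS⟩ := key_lemma q hq v3 w3 hind ![2 * Z 0 0, Z 1 0, Z 0 1]
  have h0 := hS 0
  have h1 := hS 1
  have h2 := hS 2
  simp only [hv3, hw3, cross_apply, Pi.add_apply, Pi.sub_apply, Matrix.cons_val_zero,
    Matrix.cons_val_one, Matrix.head_cons, Matrix.cons_val_two, Matrix.tail_cons] at h0 h1 h2
  set X : Matrix (Fin 2) (Fin 2) ℤ := !![X3 0, X3 1; X3 2, -X3 0] with hX
  set Y : Matrix (Fin 2) (Fin 2) ℤ := !![Y3 0, Y3 1; Y3 2, -Y3 0] with hY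
  refine ⟨X, Y, by simp [hX, Matrix.trace_fin_two], by simp [hY, Matrix.trace_fin_two], ?_⟩
  obtain ⟨e0, he0⟩ := h0
  obtain ⟨e1, he1⟩ := h1
  obtain ⟨e2, he2⟩ := h2
  have hsmul : (2 • Z : Matrix (Fin 2) (Fin 2) ℤ) = Z + Z := two_smul ℕ Z
  have G : ∀ i j : Fin 2, (q : ℤ) ∣ ((v * X - X * v) + (w * Y - Y * w) - 2 • Z) i j := by
    have G00 : (q : ℤ) ∣ ((v * X - X * v) + (w * Y - Y * w) - 2 • Z) 0 0 := by
      refine ⟨e0, ?_⟩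
      simp only [hsmul, hX, hY, Matrix.add_apply, Matrix.sub_apply, Matrix.mul_apply,
        Fin.sum_univ_two, Matrix.of_apply, Matrix.cons_val', Matrix.cons_val_zero,
        Matrix.cons_val_one, Matrix.head_cons, Matrix.empty_val', Matrix.cons_val_fin_one,
        Matrix.head_fin_const]
      linear_combination he0
    have G01 : (q : ℤ) ∣ ((v * X - X * v) + (w * Y - Y * w) - 2 • Z) 0 1 := by
      refine ⟨2 * e2, ?_⟩
      simp only [hsmul, hX, hY, Matrix.add_apply, Matrix.sub_apply, Matrix.mul_apply,
        Fin.sum_univ_two, Matrix.of_apply, Matrix.cons_val', Matrix.cons_val_zero,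
        Matrix.cons_val_one, Matrix.head_cons, Matrix.empty_val', Matrix.cons_val_fin_one,
        Matrix.head_fin_const]
      linear_combination 2 * he2 - X3 1 * hv11 - Y3 1 * hw11
    have G10 : (q : ℤ) ∣ ((v * X - X * v) + (w * Y - Y * w) - 2 • Z) 1 0 := by
      refine ⟨2 * e1, ?_⟩
      simp only [hsmul, hX, hY, Matrix.add_apply, Matrix.sub_apply, Matrix.mul_apply,
        Fin.sum_univ_two, Matrix.of_apply, Matrix.cons_val', Matrix.cons_val_zero,
        Matrix.cons_val_one, Matrix.head_cons, Matrix.empty_val', Matrix.cons_val_fin_one,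
        Matrix.head_fin_const]
      linear_combination 2 * he1 + X3 2 * hv11 + Y3 2 * hw11
    have G11 : (q : ℤ) ∣ ((v * X - X * v) + (w * Y - Y * w) - 2 • Z) 1 1 := by
      refine ⟨-e0, ?_⟩
      simp only [hsmul, hX, hY, Matrix.add_apply, Matrix.sub_apply, Matrix.mul_apply,
        Fin.sum_univ_two, Matrix.of_apply, Matrix.cons_val', Matrix.cons_val_zero,
        Matrix.cons_val_one, Matrix.head_cons, Matrix.empty_val', Matrix.cons_val_fin_one,
        Matrix.head_fin_const]
      linear_combination -he0 - 2 * hZ11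
    intro i j
    fin_cases i <;> fin_cases j
    · exact G00
    · exact G01
    · exact G10
    · exact G11
  exact G
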